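/- Let 𝔄 be a Boolean algebra with two operators ◇₀, ◇₁ (duals □₀, □₁) validating the GLB axioms: □ₙ(□ₙx → x) ≤ □ₙx for n = 0,1 (as inequalities holding for all x), □₀x ≤ □₁x, and ◇₀x ≤ □₁◇₀x. Then for every x ∈ 𝔄, ◇₁(□₀(□₀x → x) ∧ ¬x) = ⊥, i.e., □₁(□₀(□₀x → x) → x) = ⊤. -/
import Mathlib


/-- The dual box of an operator `f` on a Boolean algebra. -/
def mbox {α : Type*} [BooleanAlgebra α] (f : α → α) (x : α) : α := (f xᶜ)ᶜ

/-- In any BAO validating the GLB axioms, `◇₁(□₀(□₀x → x) ⊓ ¬x) = ⊥`,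
i.e. `□₁(□₀(□₀x → x) → x) = ⊤`, for every `x`. -/
theorem stmt_14 {α : Type*} [BooleanAlgebra α] (f0 f1 : α → α)
    (h0join : ∀ x y : α, f0 (x ⊔ y) = f0 x ⊔ f0 y) (h0bot : f0 ⊥ = ⊥)
    (h1join : ∀ x y : α, f1 (x ⊔ y) = f1 x ⊔ f1 y) (h1bot : f1 ⊥ = ⊥)
    (hlob0 : ∀ x : α, mbox f0 ((mbox f0 x)ᶜ ⊔ x) ≤ mbox f0 x)
    (hlob1 : ∀ x : α, mbox f1 ((mbox f1 x)ᶜ ⊔ x) ≤ mbox f1 x)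
    (h01 : ∀ x : α, mbox f0 x ≤ mbox f1 x)
    (hiii : ∀ x : α, f0 x ≤ mbox f1 (f0 x)) :
    ∀ x : α,
      f1 (mbox f0 ((mbox f0 x)ᶜ ⊔ x) ⊓ xᶜ) = ⊥ ∧
      mbox f1 ((mbox f0 ((mbox f0 x)ᶜ ⊔ x))ᶜ ⊔ x) = ⊤ := by
  have mono1 : ∀ a b : α, a ≤ b → f1 a ≤ f1 b := by
    intro a b hab
    have h : f1 a ⊔ f1 b = f1 b := by rw [← h1join, sup_eq_right.mpr hab]
    exact sup_eq_right.mp h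
  intro x
  -- stability: ◇₁ □₀ x ≤ □₀ x
  have hstab : f1 (mbox f0 x) ≤ mbox f0 x := by
    have h := hiii xᶜ
    simp only [mbox] at h ⊢
    exact le_compl_comm.mp h
  have h1 : mbox f0 ((mbox f0 x)ᶜ ⊔ x) ⊓ xᶜ ≤ mbox f0 x :=
    le_trans inf_le_left (hlob0 x)
  have h2 : f1 (mbox f0 ((mbox f0 x)ᶜ ⊔ x) ⊓ xᶜ) ≤ mbox f1 x :=
    ((mono1 _ _ h1).trans hstab).trans (h01 x)
  have h3 : f1 (mbox f0 ((mbox f0 x)ᶜ ⊔ x) ⊓ xᶜ) ≤ (mbox f1 x)ᶜ := by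
    have := mono1 _ _ (inf_le_right (a := mbox f0 ((mbox f0 x)ᶜ ⊔ x)) (b := xᶜ))
    simpa [mbox] using this
  have key : f1 (mbox f0 ((mbox f0 x)ᶜ ⊔ x) ⊓ xᶜ) = ⊥ :=
    le_antisymm (by simpa using le_inf h2 h3) bot_le
  refine ⟨key, ?_⟩
  have hc : ((mbox f0 ((mbox f0 x)ᶜ ⊔ x))ᶜ ⊔ x)ᶜ = mbox f0 ((mbox f0 x)ᶜ ⊔ x) ⊓ xᶜ := by
    simp [compl_sup]
  rw [mbox, hc, key, compl_bot]
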